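/- Let a, b > 1 ≥ c > 0 with ab − a − c ≥ 0, and define R(x) = ((ab−c)x+c)/((ab−a−c)x+a+c) and T(x) = x/(x+a). For every word f in the semigroup generated by R and T of the form f = R g T^k (where g is empty or does not end in T, k ≥ 0), with m occurrences of R and n occurrences of T in f, there exist reals u, v with u + a^k b^{m−1} + c a^{k−1} b^{m−1} ≥ 0, u + b^m ≥ 0, v ≥ 0, such that f'(x) = a^n b^m / ((b^m + u)x + v + c a^{k−1} b^{m−1})² for all x ∈ [0,1]. -/

import Mathlib

/-- Apply a word (head is the outermost map): `true` codes `R`, `false` codes `T`. -/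
def wordApply (R T : ℝ → ℝ) (w : List Bool) (x : ℝ) : ℝ :=
  w.foldr (fun s z => if s then R z else T z) x

lemma step_core (p q r s D pl ql rl sl dl : ℝ) (F G : ℝ → ℝ)
    (hp : 0 ≤ p) (hq : 0 ≤ q) (hr : 0 ≤ r) (hs : 0 < s)
    (hqs : q ≤ s) (hpq : p + q ≤ r + s) (hdet : p * s - q * r = D)
    (hpl : 0 ≤ pl) (hql : 0 ≤ ql) (hrl : 0 ≤ rl) (hsl : 0 < sl)
    (hqlsl : ql ≤ sl) (hsuml : pl + ql ≤ rl + sl) (hdl : pl * sl - ql * rl = dl)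
    (hF : ∀ y ∈ Set.Icc (0:ℝ) 1, F y = (p*y+q)/(r*y+s) ∧ F y ∈ Set.Icc (0:ℝ) 1 ∧
          HasDerivAt F (D/(r*y+s)^2) y)
    (hG : ∀ x ∈ Set.Icc (0:ℝ) 1, G x = (pl*x+ql)/(rl*x+sl) ∧ G x ∈ Set.Icc (0:ℝ) 1 ∧
          HasDerivAt G (dl/(rl*x+sl)^2) x) :
    0 ≤ p*pl+q*rl ∧ 0 ≤ p*ql+q*sl ∧ 0 ≤ r*pl+s*rl ∧ 0 < r*ql+s*sl ∧
    p*ql+q*sl ≤ r*ql+s*sl ∧ (p*pl+q*rl) + (p*ql+q*sl) ≤ (r*pl+s*rl) + (r*ql+s*sl) ∧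
    (p*pl+q*rl) * (r*ql+s*sl) - (p*ql+q*sl) * (r*pl+s*rl) = D * dl ∧
    ∀ x ∈ Set.Icc (0:ℝ) 1,
      F (G x) = ((p*pl+q*rl)*x + (p*ql+q*sl)) / ((r*pl+s*rl)*x + (r*ql+s*sl)) ∧
      F (G x) ∈ Set.Icc (0:ℝ) 1 ∧
      HasDerivAt (fun x => F (G x)) ((D*dl)/((r*pl+s*rl)*x + (r*ql+s*sl))^2) x := by
  refine ⟨by positivity, by positivity, by positivity, by positivity, ?_, ?_, ?_, ?_⟩
  · nlinarith [mul_nonneg hql (show (0:ℝ) ≤ r+s-p-q by linarith),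
      mul_nonneg (sub_nonneg.2 hqlsl) (sub_nonneg.2 hqs)]
  · nlinarith [mul_nonneg (add_nonneg hpl hql) (show (0:ℝ) ≤ r+s-p-q by linarith),
      mul_nonneg (show (0:ℝ) ≤ rl+sl-(pl+ql) by linarith) (sub_nonneg.2 hqs)]
  · rw [← hdet, ← hdl]; ring
  · intro x hx
    obtain ⟨hx0, hx1⟩ := hx
    obtain ⟨hGx, hGmem, hGder⟩ := hG x ⟨hx0, hx1⟩
    obtain ⟨hFy, hFmem, hFder⟩ := hF (G x) hGmem
    have hdl0 : 0 < rl*x+sl := by nlinarith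
    have hds0 : 0 < r*(G x)+s := by nlinarith [hGmem.1, mul_nonneg hr hGmem.1]
    have keyeq : (r * G x + s) * (rl*x+sl) = (r*pl+s*rl)*x + (r*ql+s*sl) := by
      rw [hGx]; field_simp; ring
    have hbig : 0 < (r*pl+s*rl)*x + (r*ql+s*sl) := by
      rw [← keyeq]; positivity
    refine ⟨?_, hFmem, ?_⟩
    · rw [hFy, hGx]
      rw [div_eq_div_iff (by rw [hGx] at hds0; positivity) (ne_of_gt hbig)]
      field_simp
      ring
    · have hcomp := hFder.comp x hGder
      refine hcomp.congr_deriv ?_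
      rw [div_mul_div_comm, ← mul_pow, keyeq]

lemma letterT (a : ℝ) (ha : 1 < a) (T : ℝ → ℝ) (hT : ∀ x : ℝ, T x = x / (x + a)) :
    ∀ x ∈ Set.Icc (0:ℝ) 1, T x = (1*x+0)/(1*x+a) ∧ T x ∈ Set.Icc (0:ℝ) 1 ∧
      HasDerivAt T (a/(1*x+a)^2) x := by
  intro x ⟨hx0, hx1⟩
  have hd : 0 < x + a := by linarith
  have hTfun : T = fun x => x / (x + a) := funext hT
  refine ⟨by rw [hT]; ring_nf, ⟨?_, ?_⟩, ?_⟩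
  · rw [hT]; positivity
  · rw [hT, div_le_one hd]; linarith
  · rw [hTfun]
    have h1 : HasDerivAt (fun y : ℝ => y + a) 1 x := (hasDerivAt_id x).add_const a
    have h2 := (hasDerivAt_id x).div h1 (ne_of_gt hd)
    refine h2.congr_deriv ?_
    simp only [id, one_mul, mul_one, add_sub_cancel_left]

lemma letterR (a b c : ℝ) (ha : 1 < a) (hb : 1 < b) (hc0 : 0 < c)
    (habc : 0 ≤ a * b - a - c) (R : ℝ → ℝ)
    (hR : ∀ x : ℝ, R x = ((a * b - c) * x + c) / ((a * b - a - c) * x + (a + c))) :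
    ∀ x ∈ Set.Icc (0:ℝ) 1, R x = ((a*b-c)*x+c)/((a*b-a-c)*x+(a+c)) ∧
      R x ∈ Set.Icc (0:ℝ) 1 ∧
      HasDerivAt R ((a^2*b)/((a*b-a-c)*x+(a+c))^2) x := by
  intro x ⟨hx0, hx1⟩
  have hd : 0 < (a*b-a-c)*x + (a+c) := by nlinarith
  have hnum : 0 ≤ (a*b-c)*x + c := by nlinarith
  have hRfun : R = fun x => ((a * b - c) * x + c) / ((a * b - a - c) * x + (a + c)) :=
    funext hR
  refine ⟨hR x, ⟨?_, ?_⟩, ?_⟩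
  · rw [hR]; positivity
  · rw [hR, div_le_one hd]; nlinarith
  · rw [hRfun]
    have h1 : HasDerivAt (fun y : ℝ => (a*b-c)*y + c) (a*b-c) x := by
      simpa using ((hasDerivAt_id x).const_mul (a*b-c)).add_const c
    have h2 : HasDerivAt (fun y : ℝ => (a*b-a-c)*y + (a+c)) (a*b-a-c) x := by
      simpa using ((hasDerivAt_id x).const_mul (a*b-a-c)).add_const (a+c)
    have h3 := h1.div h2 (ne_of_gt hd)
    refine h3.congr_deriv ?_
    have : (a*b-c) * ((a*b-a-c)*x+(a+c)) - ((a*b-c)*x+c)*(a*b-a-c) = a^2*b := by ring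
    rw [this]

lemma master (a b c : ℝ) (ha : 1 < a) (hb : 1 < b) (hc1 : c ≤ 1) (hc0 : 0 < c)
    (habc : 0 ≤ a * b - a - c) (R T : ℝ → ℝ)
    (hR : ∀ x : ℝ, R x = ((a * b - c) * x + c) / ((a * b - a - c) * x + (a + c)))
    (hT : ∀ x : ℝ, T x = x / (x + a)) (Q : List Bool) :
    ∃ p q r s : ℝ, 0 ≤ p ∧ 0 ≤ q ∧ 0 ≤ r ∧ 0 < s ∧ q ≤ s ∧ p + q ≤ r + s ∧
      (a*b)^(Q.count true) ≤ r + s ∧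
      p * s - q * r = a^(Q.count false) * (a^2*b)^(Q.count true) ∧
      (∀ Q₀ : List Bool, ∀ j : ℕ, Q = Q₀ ++ true :: List.replicate j false →
        c * (a*b)^(Q₀.count true) * a^j ≤ s ∧
        ((a*b-a-c) + c * ∑ i ∈ Finset.range j, a^i) * (a*b)^(Q₀.count true) ≤ r) ∧
      ∀ x ∈ Set.Icc (0:ℝ) 1,
        wordApply R T Q x = (p*x+q)/(r*x+s) ∧ wordApply R T Q x ∈ Set.Icc (0:ℝ) 1 ∧
        HasDerivAt (wordApply R T Q) ((a^(Q.count false) * (a^2*b)^(Q.count true))/(r*x+s)^2) x := by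
  have hab1 : (1:ℝ) < a*b := by nlinarith
  have hab0 : (0:ℝ) < a*b := by linarith
  induction Q using List.reverseRecOn with
  | nil =>
    refine ⟨1, 0, 0, 1, by norm_num, by norm_num, by norm_num, by norm_num, by norm_num,
      by norm_num, by norm_num, by norm_num, ?_, ?_⟩
    · intro Q₀ j h
      exact absurd h (by simp)
    · intro x hx
      refine ⟨by simp [wordApply], (show wordApply R T [] x = x by simp [wordApply]) ▸ hx, ?_⟩
      have : wordApply R T [] = fun x : ℝ => x := by funext x; rfl
      rw [this]
      exact (hasDerivAt_id' x).congr_deriv (by simp)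
  | append_singleton Q l ih =>
    obtain ⟨p, q, r, s, hp, hq, hr, hs, hqs, hpq, hrs, hdet, hclause, hfun⟩ := ih
    have hfunext : ∀ G : ℝ → ℝ, (∀ z, (if l then R z else T z) = G z) →
        wordApply R T (Q ++ [l]) = fun x => wordApply R T Q (G x) := by
      intro G hG
      funext x
      simp only [wordApply, List.foldr_append, List.foldr_cons, List.foldr_nil]
      rw [hG]
    cases l with
    | true =>
      have hG := letterR a b c ha hb hc0 habc R hR
      have hstep := step_core p q r s (a^(Q.count false) * (a^2*b)^(Q.count true))
        (a*b-c) c (a*b-a-c) (a+c) (a^2*b) (wordApply R T Q) R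
        hp hq hr hs hqs hpq hdet
        (by nlinarith) (le_of_lt hc0) habc (by linarith) (by linarith) (by linarith)
        (by ring) hfun hG
      obtain ⟨h1, h2, h3, h4, h5, h6, h7, h8⟩ := hstep
      have hwa : wordApply R T (Q ++ [true]) = fun x => wordApply R T Q (R x) :=
        hfunext R (fun z => by simp)
      have hct : (Q ++ [true]).count true = Q.count true + 1 := by simp
      have hcf : (Q ++ [true]).count false = Q.count false := by simp
      refine ⟨p*(a*b-c)+q*(a*b-a-c), p*c+q*(a+c), r*(a*b-c)+s*(a*b-a-c), r*c+s*(a+c),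
        h1, h2, h3, h4, h5, h6, ?_, ?_, ?_, ?_⟩
      · rw [hct, pow_succ]
        have : (r*(a*b-c)+s*(a*b-a-c)) + (r*c+s*(a+c)) = (r+s)*(a*b) := by ring
        rw [this]
        exact mul_le_mul_of_nonneg_right hrs (le_of_lt hab0)
      · rw [hct, hcf, h7, pow_succ]; ring
      · intro Q₀ j heq
        have hj : j = 0 := by
          cases j with
          | zero => rfl
          | succ j' =>
            exfalso
            rw [List.replicate_succ'] at heq
            have h' : Q ++ [true] = (Q₀ ++ true :: List.replicate j' false) ++ [false] := by
              rw [heq]; simp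
            have habs := (List.append_inj' h' (by simp)).2
            simp at habs
        subst hj
        have heq0 : Q ++ [true] = Q₀ ++ [true] := by simpa using heq
        have hQ0 : Q = Q₀ := List.append_cancel_right heq0
        subst hQ0
        constructor
        · simp only [pow_zero, mul_one]
          nlinarith [mul_le_mul_of_nonneg_left hrs (le_of_lt hc0), mul_nonneg hr (show (0:ℝ) ≤ a by linarith)]
        · simp only [Finset.range_zero, Finset.sum_empty, mul_zero, add_zero]
          nlinarith [mul_le_mul_of_nonneg_left hrs habc, mul_nonneg hr (show (0:ℝ) ≤ a by linarith),
            mul_nonneg hs.le (show (0:ℝ) ≤ a+c by linarith)]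
      · intro x hx
        obtain ⟨e1, e2, e3⟩ := h8 x hx
        rw [hwa] at *
        exact ⟨e1, e2, by rw [hct, hcf, pow_succ]; convert e3 using 2; ring⟩
    | false =>
      have hG := letterT a ha T hT
      have hstep := step_core p q r s (a^(Q.count false) * (a^2*b)^(Q.count true))
        1 0 1 a a (wordApply R T Q) T
        hp hq hr hs hqs hpq hdet
        (by norm_num) (by norm_num) (by norm_num) (by linarith) (by linarith) (by linarith)
        (by ring) hfun hG
      obtain ⟨h1, h2, h3, h4, h5, h6, h7, h8⟩ := hstep
      have hwa : wordApply R T (Q ++ [false]) = fun x => wordApply R T Q (T x) :=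
        hfunext T (fun z => by simp)
      have hct : (Q ++ [false]).count true = Q.count true := by simp
      have hcf : (Q ++ [false]).count false = Q.count false + 1 := by simp
      refine ⟨p*1+q*1, p*0+q*a, r*1+s*1, r*0+s*a, h1, h2, h3, h4, h5, h6, ?_, ?_, ?_, ?_⟩
      · rw [hct]
        nlinarith [mul_nonneg hs.le (show (0:ℝ) ≤ a - 1 by linarith)]
      · rw [hct, hcf, h7, pow_succ]; ring
      · intro Q₀ j heq
        cases j with
        | zero =>
          exfalso
          have habs := (List.append_inj' heq (by simp)).2
          simp at habs
        | succ j' =>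
          rw [List.replicate_succ'] at heq
          have heq' : Q ++ [false] = (Q₀ ++ true :: List.replicate j' false) ++ [false] := by
            rw [heq]; simp
          have hQ : Q = Q₀ ++ true :: List.replicate j' false :=
            List.append_cancel_right heq'
          obtain ⟨hs', hr'⟩ := hclause Q₀ j' hQ
          constructor
          · have ha0 : (0:ℝ) ≤ a := by linarith
            have h2' := mul_le_mul_of_nonneg_right hs' ha0
            ring_nf at h2' ⊢
            linarith
          · rw [Finset.sum_range_succ]
            have h3' := add_le_add hr' hs'
            ring_nf at h3' ⊢
            linarith
      · intro x hx
        obtain ⟨e1, e2, e3⟩ := h8 x hx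
        rw [hwa] at *
        exact ⟨e1, e2, by rw [hct, hcf, pow_succ]; convert e3 using 2; ring⟩

/-- derivative formula for words of the form R g T^k in the semigroup
generated by R(x) = ((ab−c)x+c)/((ab−a−c)x+a+c) and T(x) = x/(x+a). -/
theorem stmt_5 (a b c : ℝ) (ha : 1 < a) (hb : 1 < b) (hc1 : c ≤ 1) (hc0 : 0 < c)
    (habc : 0 ≤ a * b - a - c)
    (R T : ℝ → ℝ)
    (hR : ∀ x : ℝ, R x = ((a * b - c) * x + c) / ((a * b - a - c) * x + (a + c)))
    (hT : ∀ x : ℝ, T x = x / (x + a))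
    (g : List Bool) (hg : g = [] ∨ g.getLast? ≠ some false) (k : ℕ)
    (w : List Bool) (hw : w = true :: (g ++ List.replicate k false)) :
    ∃ u v : ℝ,
      0 ≤ u + a ^ (k : ℤ) * b ^ ((w.count true : ℤ) - 1)
            + c * a ^ ((k : ℤ) - 1) * b ^ ((w.count true : ℤ) - 1) ∧
      0 ≤ u + b ^ ((w.count true : ℤ)) ∧
      0 ≤ v ∧
      ∀ x ∈ Set.Icc (0:ℝ) 1,
        deriv (wordApply R T w) x =
          a ^ ((w.count false : ℤ)) * b ^ ((w.count true : ℤ)) /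
            ((b ^ ((w.count true : ℤ)) + u) * x + v
              + c * a ^ ((k : ℤ) - 1) * b ^ ((w.count true : ℤ) - 1)) ^ 2 := by
  have ha0 : (0:ℝ) < a := by linarith
  have hb0 : (0:ℝ) < b := by linarith
  obtain ⟨Q₀, hdecomp⟩ : ∃ Q₀ : List Bool, w = Q₀ ++ true :: List.replicate k false := by
    rcases hg with hgnil | hglast
    · exact ⟨[], by rw [hw, hgnil]; simp⟩
    · by_cases hgn : g = []
      · exact ⟨[], by rw [hw, hgn]; simp⟩
      · refine ⟨true :: g.dropLast, ?_⟩
        have hgl : g.getLast hgn = true := by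
          cases hgll : g.getLast hgn
          · exact absurd (by rw [List.getLast?_eq_getLast hgn, hgll]) hglast
          · rfl
        have hgd : g.dropLast ++ [true] = g := by
          rw [← hgl]; exact List.dropLast_append_getLast hgn
        rw [hw, ← hgd]
        simp
  set M := Q₀.count true with hM
  set mm := w.count true with hmmdef
  set nn := w.count false with hnndef
  have hmm : mm = M + 1 := by
    rw [hmmdef, hdecomp]
    simp [List.count_append, List.count_cons, List.count_replicate]
    exact hM.symm
  obtain ⟨p, q, r, s, hp, hq, hr, hs, hqs, hpq, hrs, hdet, hclause, hfun⟩ :=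
    master a b c ha hb hc1 hc0 habc R T hR hT w
  obtain ⟨hs2, hr2⟩ := hclause Q₀ k hdecomp
  have hAm : (0:ℝ) < a^mm := pow_pos ha0 mm
  have hz1 : (b:ℝ) ^ ((mm : ℤ)) = b ^ mm := zpow_natCast b mm
  have hz2 : (b:ℝ) ^ ((mm : ℤ) - 1) = b ^ M := by
    rw [hmm]; push_cast; rw [add_sub_cancel_right]; exact zpow_natCast b M
  have hz3 : (a:ℝ) ^ ((k : ℤ) - 1) = a ^ k / a := by
    rw [zpow_sub_one₀ (ne_of_gt ha0), zpow_natCast, div_eq_mul_inv]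
  have hz4 : (a:ℝ) ^ ((nn : ℤ)) = a ^ nn := zpow_natCast a nn
  have hzk : (a:ℝ) ^ ((k : ℤ)) = a ^ k := zpow_natCast a k
  have hSum0 : (0:ℝ) ≤ ∑ i ∈ Finset.range k, a^i :=
    Finset.sum_nonneg fun i _ => by positivity
  have hak1 : (1:ℝ) ≤ a^k := one_le_pow₀ ha.le
  have haK : a ≤ a^(k+1) := by
    simpa using pow_le_pow_right₀ ha.le (show 1 ≤ k+1 by omega)
  refine ⟨r/a^mm - b^mm, s/a^mm - c*a^k*b^M/a, ?_, ?_, ?_, ?_⟩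
  · rw [hz2, hz3, hzk, hmm]
    have E1 : r/a^(M+1) - b^(M+1) + a^k*b^M + c*(a^k/a)*b^M
        = (r*a + (a^(k+1) + c*a^k - b*a)*b^M*a^(M+1)) / (a^(M+1)*a) := by
      field_simp
      ring
    rw [E1]
    apply div_nonneg _ (by positivity)
    have key : ((a*b-a-c) + c*(∑ i ∈ Finset.range k, a^i))*(a*b)^M*a
        + (a^(k+1)+c*a^k-b*a)*b^M*a^(M+1)
        = (c*((∑ i ∈ Finset.range k, a^i)+a^k-1) + (a^(k+1)-a))*(b^M*a^(M+1)) := by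
      rw [mul_pow]; ring
    have hra := mul_le_mul_of_nonneg_right hr2 ha0.le
    have hpos : 0 ≤ (c*((∑ i ∈ Finset.range k, a^i)+a^k-1) + (a^(k+1)-a))*(b^M*a^(M+1)) := by
      apply mul_nonneg _ (by positivity)
      nlinarith
    linarith
  · rw [hz1]
    have : r/a^mm - b^mm + b^mm = r/a^mm := by ring
    rw [this]
    positivity
  · rw [hmm]
    have E3 : s/a^(M+1) - c*a^k*b^M/a = (s*a - c*a^k*b^M*a^(M+1))/(a^(M+1)*a) := by
      field_simp
    rw [E3]
    apply div_nonneg _ (by positivity)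
    have hsa := mul_le_mul_of_nonneg_right hs2 ha0.le
    have e : c*(a*b)^M*a^k*a = c*a^k*b^M*a^(M+1) := by rw [mul_pow]; ring
    rw [e] at hsa
    linarith
  · intro x hx
    have hd := (hfun x hx).2.2.deriv
    rw [hd, hz1, hz2, hz3, hz4]
    have hrx : 0 < r*x+s := by nlinarith [mul_nonneg hr hx.1]
    have hden : (b^mm + (r/a^mm - b^mm))*x + (s/a^mm - c*a^k*b^M/a) + c*(a^k/a)*b^M
        = (r*x+s)/a^mm := by
      field_simp
      ring
    rw [hden]
    have hexp : (a^2*b)^mm = (a^mm)^2*b^mm := by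
      rw [mul_pow, ← pow_mul, ← pow_mul, Nat.mul_comm]
    rw [hexp]
    rw [div_pow]
    field_simp
    ring
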